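/- Let Ω be a linear symplectic form on ℂ^n such that the restriction of Ω to each coordinate subspace ℂ^n_I = {z ∈ ℂ^n : z_i = 0 for all i ∈ I} is nondegenerate, and such that the orientation induced by Ω on each ℂ^n_I agrees with its complex orientation. Then for every i ∈ {1,...,n}, every s ≥ 0, and every subset I ⊆ {1,...,n}, the 2-form Ω + s·dx_i∧dy_i restricted to ℂ^n_I is nondegenerate. -/

import Mathlib

set_option synthInstance.maxHeartbeats 1000000
set_option maxHeartbeats 1000000

open ExteriorAlgebra

/-- The real-linear functional `dx_i = Re ∘ z_i` on `ℂ^n`. -/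
noncomputable def dxF (n : ℕ) (i : Fin n) : Module.Dual ℝ (Fin n → ℂ) :=
  Complex.reLm.comp ((LinearMap.proj i : (Fin n → ℂ) →ₗ[ℂ] ℂ).restrictScalars ℝ)

/-- The real-linear functional `dy_i = Im ∘ z_i` on `ℂ^n`. -/
noncomputable def dyF (n : ℕ) (i : Fin n) : Module.Dual ℝ (Fin n → ℂ) :=
  Complex.imLm.comp ((LinearMap.proj i : (Fin n → ℂ) →ₗ[ℂ] ℂ).restrictScalars ℝ)

/-- `dx_i` as a degree-1 element of the exterior algebra of the dual of `ℂ^n`. -/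
noncomputable def dxE (n : ℕ) (i : Fin n) :
    ExteriorAlgebra ℝ (Module.Dual ℝ (Fin n → ℂ)) :=
  ExteriorAlgebra.ι ℝ (dxF n i)

/-- `dy_i` as a degree-1 element of the exterior algebra of the dual of `ℂ^n`. -/
noncomputable def dyE (n : ℕ) (i : Fin n) :
    ExteriorAlgebra ℝ (Module.Dual ℝ (Fin n → ℂ)) :=
  ExteriorAlgebra.ι ℝ (dyF n i)

/-- The coordinate area form `dx_i ∧ dy_i`. -/
noncomputable def dxyE (n : ℕ) (i : Fin n) :
    ExteriorAlgebra ℝ (Module.Dual ℝ (Fin n → ℂ)) :=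
  dxE n i * dyE n i

/-- The complex volume form of the coordinate subspace `ℂ^n_I`: the wedge of
`dx_i ∧ dy_i` over `i ∉ I` (in increasing order). -/
noncomputable def volForm (n : ℕ) (I : Finset (Fin n)) :
    ExteriorAlgebra ℝ (Module.Dual ℝ (Fin n → ℂ)) :=
  (((Iᶜ).sort (· ≤ ·)).map fun i => dxyE n i).prod

/-- The projection of `ℂ^n` onto the coordinate subspace `ℂ^n_I` (setting the
coordinates in `I` to zero). -/
noncomputable def coordProj (n : ℕ) (I : Finset (Fin n)) :
    (Fin n → ℂ) →ₗ[ℝ] (Fin n → ℂ) where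
  toFun z := fun i => if i ∈ I then 0 else z i
  map_add' := by intro a b; funext i; by_cases h : i ∈ I <;> simp [h]
  map_smul' := by intro c a; funext i; by_cases h : i ∈ I <;> simp [h]

/-- Pullback of exterior forms on `ℂ^n` along the projection onto `ℂ^n_I`; this computes
the restriction of a form to the coordinate subspace `ℂ^n_I`. -/
noncomputable def pullbackI (n : ℕ) (I : Finset (Fin n)) :
    ExteriorAlgebra ℝ (Module.Dual ℝ (Fin n → ℂ)) →ₐ[ℝ]
      ExteriorAlgebra ℝ (Module.Dual ℝ (Fin n → ℂ)) :=
  ExteriorAlgebra.map ((coordProj n I).dualMap)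

/-- The subspace of genuine (grade-2) alternating 2-forms inside the exterior algebra. -/
noncomputable def grade2 (n : ℕ) :
    Submodule ℝ (ExteriorAlgebra ℝ (Module.Dual ℝ (Fin n → ℂ))) :=
  LinearMap.range (ExteriorAlgebra.ι ℝ (M := Module.Dual ℝ (Fin n → ℂ))) ^ 2

/-! ### Auxiliary lemmas -/

section Aux

variable {R M : Type*} [CommRing R] [AddCommGroup M] [Module R M]

theorem aux_swap (x y : M) : ι R x * ι R y = -(ι R y * ι R x) :=
  eq_neg_of_add_eq_zero_left (ι_add_mul_swap x y)

/-- degree-2 elements `ι a * ι b` are central in the exterior algebra. -/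
theorem aux_central (a b : M) (x : ExteriorAlgebra R M) :
    (ι R a * ι R b) * x = x * (ι R a * ι R b) := by
  induction x using ExteriorAlgebra.induction with
  | algebraMap r => rw [← Algebra.commutes]
  | add x y hx hy => rw [mul_add, add_mul, hx, hy]
  | mul x y hx hy => rw [← mul_assoc, hx, mul_assoc, hy, mul_assoc]
  | ι m =>
      calc (ι R a * ι R b) * ι R m = ι R a * (ι R b * ι R m) := by rw [mul_assoc]
        _ = -(ι R a * (ι R m * ι R b)) := by rw [aux_swap b m, mul_neg]
        _ = -((ι R a * ι R m) * ι R b) := by rw [mul_assoc]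
        _ = ((ι R m * ι R a) * ι R b) := by rw [aux_swap a m, neg_mul, neg_neg]
        _ = ι R m * (ι R a * ι R b) := by rw [mul_assoc]

theorem aux_sq_zero (a b : M) : (ι R a * ι R b) * (ι R a * ι R b) = 0 := by
  calc (ι R a * ι R b) * (ι R a * ι R b)
      = ι R a * ((ι R b * ι R a) * ι R b) := by noncomm_ring
    _ = ι R a * (-(ι R a * ι R b) * ι R b) := by rw [aux_swap b a]
    _ = -(ι R a * ι R a) * (ι R b * ι R b) := by noncomm_ring
    _ = 0 := by rw [ι_sq_zero, neg_zero, zero_mul]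

/-- Binomial expansion for `(a+b)^m` with `b` central of square zero. -/
theorem aux_pow (a b : ExteriorAlgebra R M)
    (hc : ∀ x, b * x = x * b) (hb : b * b = 0) :
    ∀ m : ℕ, 1 ≤ m → (a + b) ^ m = a ^ m + m • (a ^ (m - 1) * b) := by
  intro m hm
  induction m with
  | zero => omega
  | succ k ih =>
      rcases Nat.eq_or_lt_of_le hm with h1 | h1
      · simp [← h1]
      · have hk : 1 ≤ k := by omega
        have hk1 : k - 1 + 1 = k := by omega
        have h2 : a ^ (k - 1) * b * a = a ^ k * b := by
          rw [mul_assoc, hc a, ← mul_assoc, ← pow_succ, hk1]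
        have h3 : a ^ (k - 1) * b * b = 0 := by rw [mul_assoc, hb, mul_zero]
        rw [pow_succ, ih hk, add_mul, mul_add, mul_add, smul_mul_assoc, smul_mul_assoc,
          h2, h3, smul_zero, add_zero, ← pow_succ, succ_nsmul]
        simp only [Nat.add_sub_cancel]
        abel

end Aux

section N

variable (n : ℕ)

theorem coordProj_apply (I : Finset (Fin n)) (z : Fin n → ℂ) (j : Fin n) :
    coordProj n I z j = if j ∈ I then 0 else z j := rfl

theorem dxyE_central (i : Fin n) (x : ExteriorAlgebra ℝ (Module.Dual ℝ (Fin n → ℂ))) :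
    dxyE n i * x = x * dxyE n i := aux_central _ _ x

theorem dxyE_sq (i : Fin n) : dxyE n i * dxyE n i = 0 := aux_sq_zero _ _

theorem pullback_ι (I : Finset (Fin n)) (φ : Module.Dual ℝ (Fin n → ℂ)) :
    pullbackI n I (ι ℝ φ) = ι ℝ ((coordProj n I).dualMap φ) :=
  ExteriorAlgebra.map_apply_ι _ _

theorem dualMap_dxF_mem (I : Finset (Fin n)) (i : Fin n) (hi : i ∈ I) :
    (coordProj n I).dualMap (dxF n i) = 0 := by
  ext z
  simp [LinearMap.dualMap_apply, dxF, coordProj_apply, hi]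

theorem dualMap_dyF_mem (I : Finset (Fin n)) (i : Fin n) (hi : i ∈ I) :
    (coordProj n I).dualMap (dyF n i) = 0 := by
  ext z
  simp [LinearMap.dualMap_apply, dyF, coordProj_apply, hi]

theorem dualMap_dxF_not_mem (I : Finset (Fin n)) (i : Fin n) (hi : i ∉ I) :
    (coordProj n I).dualMap (dxF n i) = dxF n i := by
  ext z
  simp [LinearMap.dualMap_apply, dxF, coordProj_apply, hi]

theorem dualMap_dyF_not_mem (I : Finset (Fin n)) (i : Fin n) (hi : i ∉ I) :
    (coordProj n I).dualMap (dyF n i) = dyF n i := by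
  ext z
  simp [LinearMap.dualMap_apply, dyF, coordProj_apply, hi]

theorem pullback_dxyE_mem (I : Finset (Fin n)) (i : Fin n) (hi : i ∈ I) :
    pullbackI n I (dxyE n i) = 0 := by
  rw [dxyE, map_mul, dxE, pullback_ι, dualMap_dxF_mem n I i hi, map_zero, zero_mul]

theorem pullback_dxyE_not_mem (I : Finset (Fin n)) (i : Fin n) (hi : i ∉ I) :
    pullbackI n I (dxyE n i) = dxyE n i := by
  simp only [dxyE, dxE, dyE, map_mul, pullback_ι, dualMap_dxF_not_mem n I i hi,
    dualMap_dyF_not_mem n I i hi]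

/-- One-form step: pulling back along `I` or `insert i I` agrees after wedging with
`dx_i ∧ dy_i`. -/
theorem dxE_mul_dxyE (i : Fin n) : dxE n i * dxyE n i = 0 := by
  rw [dxyE, ← mul_assoc, dxE, ι_sq_zero, zero_mul]

theorem dyE_mul_dxyE (i : Fin n) : dyE n i * dxyE n i = 0 := by
  rw [dxyE, ← mul_assoc, dxE, dyE, aux_swap, neg_mul, mul_assoc, ι_sq_zero, mul_zero, neg_zero]

theorem step_oneform (I : Finset (Fin n)) (i : Fin n) (hi : i ∉ I)
    (φ : Module.Dual ℝ (Fin n → ℂ)) :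
    ι ℝ ((coordProj n I).dualMap φ) * dxyE n i
      = ι ℝ ((coordProj n (insert i I)).dualMap φ) * dxyE n i := by
  set u : Fin n → ℂ := Pi.single i 1 with hu
  set v : Fin n → ℂ := Pi.single i Complex.I with hv
  have hvec : ∀ z : Fin n → ℂ, coordProj n I z
      = coordProj n (insert i I) z + (z i).re • u + (z i).im • v := by
    intro z
    funext j
    by_cases hj : j = i
    · subst hj
      simp only [coordProj_apply, hi, if_neg, Finset.mem_insert, true_or, if_pos,
        Pi.add_apply, Pi.smul_apply, hu, hv, Pi.single_eq_same, zero_add,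
        smul_eq_mul, Complex.real_smul]
      simp [Complex.ext_iff]
    · by_cases hjI : j ∈ I
      · simp [coordProj_apply, hjI, Finset.mem_insert, hj, hu, hv,
          Pi.single_eq_of_ne (show j ≠ i from hj)]
      · simp [coordProj_apply, hjI, Finset.mem_insert, hj, hu, hv,
          Pi.single_eq_of_ne (show j ≠ i from hj)]
  have hδ : (coordProj n I).dualMap φ
      = (coordProj n (insert i I)).dualMap φ + φ u • dxF n i + φ v • dyF n i := by
    refine LinearMap.ext fun z => ?_
    simp only [LinearMap.dualMap_apply', LinearMap.comp_apply, LinearMap.add_apply,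
      LinearMap.smul_apply, smul_eq_mul]
    rw [hvec z, map_add, map_add, map_smul, map_smul]
    simp only [smul_eq_mul, dxF, dyF]
    simp only [LinearMap.coe_comp, Function.comp_apply, LinearMap.coe_restrictScalars,
      LinearMap.proj_apply, Complex.reLm_coe, Complex.imLm_coe]
    ring
  rw [hδ, map_add, map_add, add_mul, add_mul, map_smul, map_smul]
  rw [show ι ℝ (dxF n i) = dxE n i from rfl, show ι ℝ (dyF n i) = dyE n i from rfl,
    smul_mul_assoc, smul_mul_assoc, dxE_mul_dxyE, dyE_mul_dxyE, smul_zero, smul_zero,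
    add_zero, add_zero]

theorem key_grade2 (I : Finset (Fin n)) (i : Fin n) (hi : i ∉ I)
    (ω : ExteriorAlgebra ℝ (Module.Dual ℝ (Fin n → ℂ))) (hω : ω ∈ grade2 n) :
    pullbackI n I ω * dxyE n i = pullbackI n (insert i I) ω * dxyE n i := by
  have hω' : ω ∈ LinearMap.range (ι ℝ (M := Module.Dual ℝ (Fin n → ℂ)))
      * LinearMap.range (ι ℝ (M := Module.Dual ℝ (Fin n → ℂ))) := by
    rw [← sq]; exact hω
  have hstep : ∀ φ : Module.Dual ℝ (Fin n → ℂ),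
      pullbackI n I (ι ℝ φ) * dxyE n i = pullbackI n (insert i I) (ι ℝ φ) * dxyE n i := by
    intro φ
    rw [pullback_ι, pullback_ι]
    exact step_oneform n I i hi φ
  refine Submodule.mul_induction_on hω' ?_ ?_
  · rintro x ⟨a, rfl⟩ y ⟨b, rfl⟩
    set P := pullbackI n I
    set P' := pullbackI n (insert i I)
    set B := dxyE n i with hB
    calc P (ι ℝ a * ι ℝ b) * B = P (ι ℝ a) * (P (ι ℝ b) * B) := by rw [map_mul, mul_assoc]
      _ = P (ι ℝ a) * (P' (ι ℝ b) * B) := by rw [hstep b]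
      _ = P (ι ℝ a) * (B * P' (ι ℝ b)) := by rw [dxyE_central]
      _ = (P (ι ℝ a) * B) * P' (ι ℝ b) := by rw [mul_assoc]
      _ = (P' (ι ℝ a) * B) * P' (ι ℝ b) := by rw [hstep a]
      _ = P' (ι ℝ a) * (B * P' (ι ℝ b)) := by rw [mul_assoc]
      _ = P' (ι ℝ a) * (P' (ι ℝ b) * B) := by rw [dxyE_central]
      _ = P' (ι ℝ a * ι ℝ b) * B := by rw [map_mul, mul_assoc]
  · intro x y hx hy
    rw [map_add, map_add, add_mul, add_mul, hx, hy]

theorem volForm_cons (I : Finset (Fin n)) (i : Fin n) (hi : i ∉ I) :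
    volForm n I = dxyE n i * volForm n (insert i I) := by
  have hperm : List.Perm (Iᶜ.sort (· ≤ ·)) (i :: ((insert i I)ᶜ.sort (· ≤ ·))) := by
    rw [← Multiset.coe_eq_coe, ← Multiset.cons_coe, Finset.sort_eq, Finset.sort_eq,
      Finset.compl_insert, Finset.erase_val]
    exact (Multiset.cons_erase (by simpa using hi)).symm
  have hpair : ((Iᶜ.sort (· ≤ ·)).map fun j => dxyE n j).Pairwise Commute := by
    refine List.pairwise_of_forall_mem_list ?_
    rintro a ha b hb
    simp only [List.mem_map] at ha hb
    obtain ⟨ja, _, rfl⟩ := ha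
    obtain ⟨jb, _, rfl⟩ := hb
    exact dxyE_central n ja (dxyE n jb)
  have := (hperm.map fun j => dxyE n j).prod_eq' hpair
  rw [volForm, this, List.map_cons, List.prod_cons, volForm]

/-- Contraction of a form with a vector. -/
noncomputable def contr (z : Fin n → ℂ) :
    ExteriorAlgebra ℝ (Module.Dual ℝ (Fin n → ℂ)) →ₗ[ℝ]
      ExteriorAlgebra ℝ (Module.Dual ℝ (Fin n → ℂ)) :=
  CliffordAlgebra.contractLeft (Module.Dual.eval ℝ (Fin n → ℂ) z)

theorem contr_ι_mul (z : Fin n → ℂ) (φ : Module.Dual ℝ (Fin n → ℂ))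
    (x : ExteriorAlgebra ℝ (Module.Dual ℝ (Fin n → ℂ))) :
    contr n z (ι ℝ φ * x) = φ z • x - ι ℝ φ * contr n z x :=
  CliffordAlgebra.contractLeft_ι_mul _ φ x

theorem contr_list_zero (z : Fin n → ℂ) :
    ∀ L : List (Fin n), (∀ k ∈ L, dxF n k z = 0 ∧ dyF n k z = 0) →
      contr n z ((L.map fun j => dxyE n j).prod) = 0 := by
  intro L
  induction L with
  | nil =>
      intro _
      rw [List.map_nil, List.prod_nil]
      exact CliffordAlgebra.contractLeft_one _ _
  | cons k L ih =>
      intro h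
      obtain ⟨hx, hy⟩ := h k List.mem_cons_self
      have hL := ih fun j hj => h j (List.mem_cons_of_mem _ hj)
      rw [List.map_cons, List.prod_cons, dxyE, dxE, dyE, mul_assoc, contr_ι_mul,
        contr_ι_mul, hx, hy, hL]
      simp

theorem prod_dxyE_ne_zero :
    ∀ L : List (Fin n), L.Nodup → ((L.map fun j => dxyE n j).prod ≠ 0) := by
  intro L
  induction L with
  | nil => intro _; simp
  | cons i L ih =>
      intro hN h0
      have hiL : i ∉ L := (List.nodup_cons.1 hN).1
      have hrest : ((L.map fun j => dxyE n j).prod) ≠ 0 := ih (List.nodup_cons.1 hN).2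
      set rest := (L.map fun j => dxyE n j).prod with hr
      have hkill : ∀ (w : ℂ) (k : Fin n), k ∈ L →
          dxF n k (Pi.single i w) = 0 ∧ dyF n k (Pi.single i w) = 0 := by
        intro w k hk
        have hki : k ≠ i := fun h => hiL (h ▸ hk)
        constructor <;> simp [dxF, dyF, Pi.single_eq_of_ne hki]
      have h1 : contr n (Pi.single i 1) (((i :: L).map fun j => dxyE n j).prod)
          = dyE n i * rest := by
        rw [List.map_cons, List.prod_cons, dxyE, dxE, mul_assoc, contr_ι_mul, dyE,
          contr_ι_mul, contr_list_zero n _ L (hkill 1)]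
        simp [dxF, dyF]
        rfl
      have h2 : contr n (Pi.single i Complex.I) (dyE n i * rest) = rest := by
        rw [dyE, contr_ι_mul, contr_list_zero n _ L (hkill Complex.I)]
        simp [dyF]
      apply hrest
      calc rest = contr n (Pi.single i Complex.I) (dyE n i * rest) := h2.symm
        _ = contr n (Pi.single i Complex.I)
              (contr n (Pi.single i 1) (((i :: L).map fun j => dxyE n j).prod)) := by rw [h1]
        _ = 0 := by rw [h0, map_zero, map_zero]

theorem volForm_ne_zero (I : Finset (Fin n)) : volForm n I ≠ 0 :=
  prod_dxyE_ne_zero n _ (Finset.sort_nodup _ _)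

end N

/-- Lemma 3.2: let `Ω` be a linear symplectic form on `ℂ^n` whose restriction
to each coordinate subspace `ℂ^n_I` is nondegenerate with orientation agreeing with the
complex orientation (encoded: the top power of the restriction is a positive multiple of
the complex volume form of `ℂ^n_I`). Then for every `i`, every `s ≥ 0` and every `I`, the
restriction of `Ω + s·dx_i∧dy_i` to `ℂ^n_I` is nondegenerate (nonzero top power). -/
theorem stmt0 (n : ℕ) (ω : ExteriorAlgebra ℝ (Module.Dual ℝ (Fin n → ℂ)))
    (hgrade : ω ∈ grade2 n)
    (hsympl : ∀ I : Finset (Fin n), ∃ c : ℝ, 0 < c ∧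
      pullbackI n I ω ^ (n - I.card) = c • volForm n I) :
    ∀ (i : Fin n) (s : ℝ), 0 ≤ s → ∀ I : Finset (Fin n),
      pullbackI n I (ω + s • dxyE n i) ^ (n - I.card) ≠ 0 := by
  intro i s hs I
  obtain ⟨c, hc, hA⟩ := hsympl I
  by_cases hi : i ∈ I
  · rw [map_add, map_smul, pullback_dxyE_mem n I i hi, smul_zero, add_zero, hA]
    exact smul_ne_zero (ne_of_gt hc) (volForm_ne_zero n I)
  · set I' := insert i I with hI'
    obtain ⟨c', hc', hA'⟩ := hsympl I'
    have hIuniv : I ≠ Finset.univ := fun h => hi (h ▸ Finset.mem_univ i)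
    have hcard : I.card < n := by
      have := Finset.card_lt_iff_ne_univ I |>.2 hIuniv
      simpa using this
    set m := n - I.card with hm
    have hm1 : 1 ≤ m := by omega
    have hcard' : n - I'.card = m - 1 := by
      rw [hI', Finset.card_insert_of_notMem hi]
      omega
    set B := dxyE n i with hB
    set A := pullbackI n I ω with hA0
    set A' := pullbackI n I' ω with hA'0
    have hpB : pullbackI n I (ω + s • B) = A + s • B := by
      rw [map_add, map_smul, pullback_dxyE_not_mem n I i hi]
    rw [hpB]
    have hcen : ∀ x, (s • B) * x = x * (s • B) := fun x => by
      rw [smul_mul_assoc, mul_smul_comm, dxyE_central]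
    have hsq : (s • B) * (s • B) = 0 := by
      rw [smul_mul_assoc, mul_smul_comm, dxyE_sq, smul_zero, smul_zero]
    rw [aux_pow A (s • B) hcen hsq m hm1]
    have hAB : ∀ k : ℕ, A ^ k * B = A' ^ k * B := by
      intro k
      induction k with
      | zero => simp
      | succ k ih =>
          calc A ^ (k + 1) * B = A ^ k * (A * B) := by rw [pow_succ, mul_assoc]
            _ = A ^ k * (A' * B) := by rw [hA0, hA'0, key_grade2 n I i hi ω hgrade]
            _ = A ^ k * (B * A') := by rw [dxyE_central]
            _ = (A ^ k * B) * A' := by rw [mul_assoc]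
            _ = (A' ^ k * B) * A' := by rw [ih]
            _ = A' ^ k * (B * A') := by rw [mul_assoc]
            _ = A' ^ k * (A' * B) := by rw [dxyE_central]
            _ = A' ^ (k + 1) * B := by rw [← mul_assoc, ← pow_succ]
    have hstep2 : A ^ (m - 1) * B = c' • volForm n I := by
      rw [hAB, ← hcard', hA', smul_mul_assoc, ← dxyE_central, ← volForm_cons n I i hi]
    have hfinal : A ^ m + m • (A ^ (m - 1) * (s • B))
        = (c + (m : ℝ) * (s * c')) • volForm n I := by
      rw [hm, hA, mul_smul_comm, hstep2, ← Nat.cast_smul_eq_nsmul ℝ, smul_smul, smul_smul,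
        ← add_smul, mul_assoc]
    rw [hfinal]
    have hpos : 0 < c + (m : ℝ) * (s * c') := by positivity
    exact smul_ne_zero (ne_of_gt hpos) (volForm_ne_zero n I)
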